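/- arXiv:1801.09817 — 2 statements merged into one kernel-verified Lean document; each statement's English description precedes it below -/
import Mathlib

section
/- Stability of the compatibility condition under matrix perturbation: suppose Σ satisfies the compatibility condition ν₁² (∑_{j∈S}|bⱼ|)² ≤ |S|(bᵀΣb) for all b with ∑_{j∉S}|bⱼ| ≤ ξ₁∑_{j∈S}|bⱼ|, and suppose Σ̃ satisfies |bᵀ(Σ̃-Σ)b| ≤ λ‖b‖₁² for all b. If (1+ξ₁)²ν₁^{-2}|S|λ ≤ η < 1, then for all b with ∑_{j∉S}|bⱼ| ≤ ξ₁∑_{j∈S}|bⱼ|, one has (1-η)ν₁²(∑_{j∈S}|bⱼ|)² ≤ |S|(bᵀΣ̃b). -/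
open Matrix

theorem stmt_10 (p : ℕ) (Sig SigTilde : Matrix (Fin (p + 1)) (Fin (p + 1)) ℝ)
    (hsym : Sig.IsSymm) (hsym' : SigTilde.IsSymm)
    (S : Finset (Fin (p + 1))) (hSne : S.Nonempty)
    (nu1 xi1 lam eta : ℝ) (hnu : 0 < nu1) (hxi : 1 < xi1) (hlam : 0 ≤ lam)
    (heta0 : 0 < eta) (heta1 : eta < 1)
    (hcompat : ∀ b : Fin (p + 1) → ℝ,
      (∑ j ∈ Sᶜ, |b j|) ≤ xi1 * ∑ j ∈ S, |b j| →
      nu1 ^ 2 * (∑ j ∈ S, |b j|) ^ 2 ≤ (S.card : ℝ) * (b ⬝ᵥ (Sig *ᵥ b)))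
    (hperturb : ∀ b : Fin (p + 1) → ℝ,
      |b ⬝ᵥ ((SigTilde - Sig) *ᵥ b)| ≤ lam * (∑ j, |b j|) ^ 2)
    (hsmall : (1 + xi1) ^ 2 * nu1⁻¹ ^ 2 * (S.card : ℝ) * lam ≤ eta) :
    ∀ b : Fin (p + 1) → ℝ,
      (∑ j ∈ Sᶜ, |b j|) ≤ xi1 * ∑ j ∈ S, |b j| →
      (1 - eta) * nu1 ^ 2 * (∑ j ∈ S, |b j|) ^ 2 ≤ (S.card : ℝ) * (b ⬝ᵥ (SigTilde *ᵥ b)) := by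
  intro b hb
  set T := ∑ j ∈ S, |b j| with hTdef
  have hT0 : 0 ≤ T := Finset.sum_nonneg fun j _ => abs_nonneg _
  have hl1 : (∑ j, |b j|) ≤ (1 + xi1) * T := by
    rw [← Finset.sum_add_sum_compl S]
    nlinarith
  have hl10 : 0 ≤ ∑ j, |b j| := Finset.sum_nonneg fun j _ => abs_nonneg _
  have hkey : b ⬝ᵥ ((SigTilde - Sig) *ᵥ b) = b ⬝ᵥ (SigTilde *ᵥ b) - b ⬝ᵥ (Sig *ᵥ b) := by
    simp [sub_mulVec, dotProduct_sub]
  have hpert := (abs_le.mp (hperturb b)).1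
  rw [hkey] at hpert
  have hcomp := hcompat b hb
  have hsq : (∑ j, |b j|) ^ 2 ≤ ((1 + xi1) * T) ^ 2 := by
    apply pow_le_pow_left₀ hl10 hl1
  have hcard : (0 : ℝ) < (S.card : ℝ) := by
    exact_mod_cast Finset.card_pos.mpr hSne
  have hnu2 : (0:ℝ) < nu1 ^ 2 := by positivity
  have hsmall' : (1 + xi1) ^ 2 * (S.card : ℝ) * lam ≤ eta * nu1 ^ 2 := by
    have := mul_le_mul_of_nonneg_right hsmall (le_of_lt hnu2)
    have hne : nu1 ≠ 0 := ne_of_gt hnu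
    field_simp at this
    nlinarith [this]
  nlinarith [mul_le_mul_of_nonneg_left hsq hlam, sq_nonneg T,
    mul_le_mul_of_nonneg_right hsmall' (sq_nonneg T),
    mul_le_mul_of_nonneg_left hpert (le_of_lt hcard)]
end

section
/- Lower bound on the symmetrized Bregman divergence for a self-scaling link: suppose ψ: ℝ → ℝ is differentiable with derivative ψ₂ satisfying ψ₂(u) ≤ ψ₂(u′)·e^{C₃|u-u′|} for all u, u′, and wᵢ ≥ 0, |h′ᵢ - hᵢ| ≤ C₄ for all i = 1,…,n. Then (1/n)∑ᵢ wᵢ(ψ(h′ᵢ) - ψ(hᵢ))(h′ᵢ - hᵢ) ≥ ((1-e^{-C₃C₄})/(C₃C₄)) · (1/n)∑ᵢ wᵢ ψ₂(hᵢ)(h′ᵢ - hᵢ)². -/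
open MeasureTheory intervalIntegral

lemma exp_int_aux (k : ℝ) (hk : 0 ≤ k) :
    ∫ u in (0:ℝ)..1, Real.exp (-(k*u)) =
      (if k = 0 then 1 else (1 - Real.exp (-k)) / k) := by
  rcases eq_or_lt_of_le hk with hk0 | hk0
  · simp [← hk0]
  · rw [if_neg (ne_of_gt hk0)]
    have hFTC : ∫ u in (0:ℝ)..1, Real.exp (-(k*u)) =
        (fun u => -(Real.exp (-(k*u))) / k) 1 - (fun u => -(Real.exp (-(k*u))) / k) 0 := by
      apply integral_eq_sub_of_hasDerivAt (f := fun u : ℝ => -(Real.exp (-(k*u))) / k)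
        (f' := fun u : ℝ => Real.exp (-(k*u)))
      · intro x _
        have h1 : HasDerivAt (fun u : ℝ => -(k*u)) (-k) x := by
          have h0 := (((hasDerivAt_id x).const_mul k)).neg
          simp only [mul_one] at h0
          exact h0
        have h2 := (h1.exp).neg.div_const k
        refine h2.congr_deriv ?_
        field_simp
      · exact (Real.continuous_exp.comp (by continuity)).intervalIntegrable 0 1
    rw [hFTC]
    simp only [mul_one, mul_zero, neg_zero, Real.exp_zero]
    field_simp
    ring

theorem stmt_12 (n : ℕ) (psi psi2 : ℝ → ℝ)
    (hderiv : ∀ u, HasDerivAt psi (psi2 u) u)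
    (hpos : ∀ u, 0 ≤ psi2 u)
    (C3 C4 : ℝ) (hC3 : 0 ≤ C3) (hC4 : 0 ≤ C4)
    (hself : ∀ u u', psi2 u ≤ psi2 u' * Real.exp (C3 * |u - u'|))
    (w h h' : Fin n → ℝ) (hw : ∀ i, 0 ≤ w i) (hclose : ∀ i, |h' i - h i| ≤ C4) :
    (if C3 * C4 = 0 then 1 else (1 - Real.exp (-(C3 * C4))) / (C3 * C4)) *
        ((1 / (n : ℝ)) * ∑ i, w i * psi2 (h i) * (h' i - h i) ^ 2)
      ≤ (1 / (n : ℝ)) * ∑ i, w i * (psi (h' i) - psi (h i)) * (h' i - h i) := by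
  set c : ℝ := if C3 * C4 = 0 then 1 else (1 - Real.exp (-(C3 * C4))) / (C3 * C4) with hc
  have hint : ∫ u in (0:ℝ)..1, Real.exp (-(C3*C4*u)) = c :=
    exp_int_aux (C3*C4) (mul_nonneg hC3 hC4)
  have hmeas : Measurable psi2 := by
    have : psi2 = deriv psi := funext fun u => ((hderiv u).deriv).symm
    rw [this]; exact measurable_deriv psi
  have key : ∀ i, c * (w i * psi2 (h i) * (h' i - h i) ^ 2) ≤
      w i * (psi (h' i) - psi (h i)) * (h' i - h i) := by
    intro i
    set a := h i with ha
    set d := h' i - h i with hdd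
    have hd : |d| ≤ C4 := hclose i
    have hderiv2 : ∀ u : ℝ, HasDerivAt (fun u => psi (a + u*d)) (psi2 (a + u*d) * d) u := by
      intro u
      have h1 : HasDerivAt (fun u : ℝ => a + u*d) d u := by
        simpa using ((hasDerivAt_id u).mul_const d).const_add a
      exact (hderiv (a + u*d)).comp u h1
    -- pointwise lower bound on [0,1]
    have hptw : ∀ u ∈ Set.Icc (0:ℝ) 1,
        Real.exp (-(C3*C4*u)) * psi2 a ≤ psi2 (a + u*d) := by
      intro u hu
      obtain ⟨hu0, hu1⟩ := hu
      have habs : |a - (a + u*d)| = u * |d| := by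
        rw [show a - (a + u*d) = -(u*d) by ring, abs_neg, abs_mul, abs_of_nonneg hu0]
      have h1 : psi2 a ≤ psi2 (a + u*d) * Real.exp (C3 * (u * |d|)) := by
        have := hself a (a + u*d); rwa [habs] at this
      have h2 : C3 * (u * |d|) ≤ C3 * C4 * u := by
        have : u * |d| ≤ C4 * u := by
          have := mul_le_mul_of_nonneg_left hd hu0
          nlinarith
        nlinarith
      have h3 : psi2 a * Real.exp (-(C3 * (u * |d|))) ≤ psi2 (a + u*d) := by
        rw [Real.exp_neg, ← div_eq_mul_inv, div_le_iff₀ (Real.exp_pos _)]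
        exact h1
      calc Real.exp (-(C3*C4*u)) * psi2 a
          ≤ Real.exp (-(C3 * (u * |d|))) * psi2 a := by
            apply mul_le_mul_of_nonneg_right _ (hpos a)
            exact Real.exp_le_exp.mpr (by linarith)
        _ = psi2 a * Real.exp (-(C3 * (u * |d|))) := by ring
        _ ≤ psi2 (a + u*d) := h3
    -- integrability of the derivative
    have hmeas2 : Measurable (fun u : ℝ => psi2 (a + u*d) * d) :=
      (hmeas.comp (measurable_const.add (measurable_id.mul_const d))).mul_const d
    have hbound : ∀ u ∈ Set.Icc (0:ℝ) 1,
        |psi2 (a + u*d) * d| ≤ psi2 a * Real.exp (C3 * C4) * |d| := by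
      intro u hu
      obtain ⟨hu0, hu1⟩ := hu
      have habs : |(a + u*d) - a| = u * |d| := by
        rw [show (a + u*d) - a = u*d by ring, abs_mul, abs_of_nonneg hu0]
      have h1 : psi2 (a + u*d) ≤ psi2 a * Real.exp (C3 * (u * |d|)) := by
        have := hself (a + u*d) a; rwa [habs] at this
      have h2 : Real.exp (C3 * (u * |d|)) ≤ Real.exp (C3 * C4) := by
        apply Real.exp_le_exp.mpr
        have : u * |d| ≤ C4 := by nlinarith [abs_nonneg d]
        nlinarith
      rw [abs_mul, abs_of_nonneg (hpos _)]
      have := mul_le_mul_of_nonneg_left h2 (hpos a)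
      nlinarith [abs_nonneg d, hpos (a + u*d)]
    have hInt : IntervalIntegrable (fun u => psi2 (a + u*d) * d) volume 0 1 := by
      rw [intervalIntegrable_iff, Set.uIoc_of_le zero_le_one]
      refine Integrable.mono' (g := fun _ => psi2 a * Real.exp (C3 * C4) * |d|)
        (integrableOn_const measure_Ioc_lt_top.ne)
        hmeas2.aestronglyMeasurable.restrict ?_
      filter_upwards [ae_restrict_mem measurableSet_Ioc] with u hu
      exact hbound u ⟨le_of_lt hu.1, hu.2⟩
    have hFTC : ∫ u in (0:ℝ)..1, psi2 (a + u*d) * d = psi (h' i) - psi a := by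
      rw [integral_eq_sub_of_hasDerivAt (fun u _ => hderiv2 u) hInt]
      norm_num [hdd, ha]
    -- comparison of integrals
    have hmono : ∫ u in (0:ℝ)..1, Real.exp (-(C3*C4*u)) * psi2 a * (d*d)
        ≤ ∫ u in (0:ℝ)..1, (psi2 (a + u*d) * d) * d := by
      apply integral_mono_on zero_le_one
      · exact ((((Real.continuous_exp.comp (by continuity)).mul continuous_const).mul
          continuous_const)).intervalIntegrable 0 1
      · exact hInt.mul_const d
      · intro u hu
        have := mul_le_mul_of_nonneg_right (hptw u hu) (mul_self_nonneg d)
        nlinarith [this]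
    have hLHS : ∫ u in (0:ℝ)..1, Real.exp (-(C3*C4*u)) * psi2 a * (d*d)
        = c * psi2 a * (d*d) := by
      have : (fun u => Real.exp (-(C3*C4*u)) * psi2 a * (d*d))
          = (fun u => Real.exp (-(C3*C4*u)) * (psi2 a * (d*d))) := by
        funext u; ring
      rw [this, intervalIntegral.integral_mul_const, hint]; ring
    have hRHS : ∫ u in (0:ℝ)..1, (psi2 (a + u*d) * d) * d
        = (psi (h' i) - psi a) * d := by
      rw [intervalIntegral.integral_mul_const, hFTC]
    rw [hLHS, hRHS] at hmono
    have := mul_le_mul_of_nonneg_left hmono (hw i)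
    calc c * (w i * psi2 a * d ^ 2) = w i * (c * psi2 a * (d*d)) := by ring
      _ ≤ w i * ((psi (h' i) - psi a) * d) := this
      _ = w i * (psi (h' i) - psi a) * d := by ring
  have hsum := Finset.sum_le_sum (s := Finset.univ) (fun i _ => key i)
  have hn : (0:ℝ) ≤ 1 / (n:ℝ) := by positivity
  calc c * ((1 / (n : ℝ)) * ∑ i, w i * psi2 (h i) * (h' i - h i) ^ 2)
      = (1 / (n : ℝ)) * ∑ i, c * (w i * psi2 (h i) * (h' i - h i) ^ 2) := by
        rw [← mul_assoc, mul_comm c, mul_assoc, Finset.mul_sum]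
    _ ≤ (1 / (n : ℝ)) * ∑ i, w i * (psi (h' i) - psi (h i)) * (h' i - h i) :=
        mul_le_mul_of_nonneg_left hsum hn
end
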